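/- Define operators U_α on V^{(ℓ)} by their action on the basis: U₁(η-e₁)^j = e^{πiℓ}(e₁-e₂)^{j-ℓ}(e₁-e₃)^{j-ℓ}(η-e₁)^{2ℓ-j}, U₂(η-e₂)^j = e^{πi(2ℓ-j)}(e₁-e₂)^{j-ℓ}(e₂-e₃)^{j-ℓ}(η-e₂)^{2ℓ-j}, U₃(η-e₃)^j = e^{-πiℓ}(e₁-e₃)^{j-ℓ}(e₂-e₃)^{j-ℓ}(η-e₃)^{2ℓ-j}. Then U_α² = (-1)^{2ℓ}·Id on V^{(ℓ)} for each α = 1,2,3. -/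
import Mathlib


open Complex

/-- The operator on `V^{(ℓ)} ≅ ℂ^{n+1}` (coordinates in the basis `(η-e_α)^j`,
`n = 2ℓ`) sending the `j`-th basis vector to `φ j` times the `(n-j)`-th. -/
noncomputable def Uop (n : ℕ) (φ : ℕ → ℂ) (c : Fin (n + 1) → ℂ) : Fin (n + 1) → ℂ :=
  fun k => φ (n - (k : ℕ)) * c (Fin.rev k)

/-- `U₁(η-e₁)^j = e^{πiℓ}(e₁-e₂)^{j-ℓ}(e₁-e₃)^{j-ℓ}(η-e₁)^{2ℓ-j}` in coordinates,
with `(e₁-e₂)^{j-ℓ} = s₁₂^{2j-n}` for a fixed square root `s₁₂² = e₁-e₂`. -/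
noncomputable def phi1 (n : ℕ) (s12 s13 : ℂ) (j : ℕ) : ℂ :=
  Complex.exp (Real.pi * Complex.I * n / 2) *
    s12 ^ (2 * (j : ℤ) - n) * s13 ^ (2 * (j : ℤ) - n)

/-- `U₂(η-e₂)^j = e^{πi(2ℓ-j)}(e₁-e₂)^{j-ℓ}(e₂-e₃)^{j-ℓ}(η-e₂)^{2ℓ-j}` in coordinates. -/
noncomputable def phi2 (n : ℕ) (s12 s23 : ℂ) (j : ℕ) : ℂ :=
  Complex.exp (Real.pi * Complex.I * ((n : ℂ) - j)) *
    s12 ^ (2 * (j : ℤ) - n) * s23 ^ (2 * (j : ℤ) - n)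

/-- `U₃(η-e₃)^j = e^{-πiℓ}(e₁-e₃)^{j-ℓ}(e₂-e₃)^{j-ℓ}(η-e₃)^{2ℓ-j}` in coordinates. -/
noncomputable def phi3 (n : ℕ) (s13 s23 : ℂ) (j : ℕ) : ℂ :=
  Complex.exp (-Real.pi * Complex.I * n / 2) *
    s13 ^ (2 * (j : ℤ) - n) * s23 ^ (2 * (j : ℤ) - n)

lemma exp_pi_I_nat (n : ℕ) : Complex.exp (Real.pi * Complex.I * n) = (-1 : ℂ) ^ n := by
  rw [mul_comm, Complex.exp_nat_mul, Complex.exp_pi_mul_I]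

lemma zpow_cancel {s : ℂ} (hs : s ≠ 0) (a : ℤ) : s ^ (-a) * s ^ a = 1 := by
  rw [← zpow_add₀ hs]; simp

lemma Uop_sq_of (n : ℕ) (φ : ℕ → ℂ)
    (h : ∀ k : ℕ, k ≤ n → φ (n - k) * φ k = (-1 : ℂ) ^ n) :
    ∀ c : Fin (n + 1) → ℂ, Uop n φ (Uop n φ c) = ((-1 : ℂ) ^ n) • c := by
  intro c
  funext k
  have hk : (k : ℕ) ≤ n := Nat.lt_succ_iff.mp k.isLt
  have hrev : (Fin.rev k : ℕ) = n - (k : ℕ) := by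
    rw [Fin.val_rev]; omega
  simp only [Uop, Fin.rev_rev, Pi.smul_apply, smul_eq_mul, hrev]
  rw [Nat.sub_sub_self hk, ← mul_assoc, h _ hk]

/-- `U_α² = (-1)^{2ℓ}·Id` on `V^{(ℓ)}` for each `α = 1,2,3` (with `n = 2ℓ`). -/
theorem Uop_sq (n : ℕ) (e1 e2 e3 s12 s13 s23 : ℂ)
    (hs12 : s12 ^ 2 = e1 - e2) (hs13 : s13 ^ 2 = e1 - e3) (hs23 : s23 ^ 2 = e2 - e3)
    (h12 : s12 ≠ 0) (h13 : s13 ≠ 0) (h23 : s23 ≠ 0) :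
    (∀ c : Fin (n + 1) → ℂ,
      Uop n (phi1 n s12 s13) (Uop n (phi1 n s12 s13) c) = ((-1 : ℂ) ^ n) • c) ∧
    (∀ c : Fin (n + 1) → ℂ,
      Uop n (phi2 n s12 s23) (Uop n (phi2 n s12 s23) c) = ((-1 : ℂ) ^ n) • c) ∧
    (∀ c : Fin (n + 1) → ℂ,
      Uop n (phi3 n s13 s23) (Uop n (phi3 n s13 s23) c) = ((-1 : ℂ) ^ n) • c) := by
  refine ⟨Uop_sq_of _ _ ?_, Uop_sq_of _ _ ?_, Uop_sq_of _ _ ?_⟩ <;> intro k hk <;>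
    [skip; skip; skip]
  · unfold phi1
    have hc : ((n - k : ℕ) : ℤ) = (n : ℤ) - k := by omega
    have he : 2 * ((n - k : ℕ) : ℤ) - n = -(2 * (k : ℤ) - n) := by omega
    rw [he]
    have hexp : Complex.exp (Real.pi * Complex.I * n / 2) *
        Complex.exp (Real.pi * Complex.I * n / 2) = (-1 : ℂ) ^ n := by
      rw [← Complex.exp_add, ← exp_pi_I_nat n]; ring_nf
    calc Complex.exp (Real.pi * Complex.I * n / 2) * s12 ^ (-(2 * (k : ℤ) - n)) *
          s13 ^ (-(2 * (k : ℤ) - n)) *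
          (Complex.exp (Real.pi * Complex.I * n / 2) * s12 ^ (2 * (k : ℤ) - n) *
            s13 ^ (2 * (k : ℤ) - n))
        = (Complex.exp (Real.pi * Complex.I * n / 2) *
            Complex.exp (Real.pi * Complex.I * n / 2)) *
          (s12 ^ (-(2 * (k : ℤ) - n)) * s12 ^ (2 * (k : ℤ) - n)) *
          (s13 ^ (-(2 * (k : ℤ) - n)) * s13 ^ (2 * (k : ℤ) - n)) := by ring
      _ = (-1 : ℂ) ^ n := by rw [hexp, zpow_cancel h12, zpow_cancel h13]; ring
  · unfold phi2
    have hc : ((n - k : ℕ) : ℂ) = (n : ℂ) - k := by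
      push_cast [Nat.cast_sub hk]; ring
    have he : 2 * ((n - k : ℕ) : ℤ) - n = -(2 * (k : ℤ) - n) := by omega
    rw [he, hc]
    have hexp : Complex.exp (Real.pi * Complex.I * ((n : ℂ) - ((n : ℂ) - k))) *
        Complex.exp (Real.pi * Complex.I * ((n : ℂ) - k)) = (-1 : ℂ) ^ n := by
      rw [← Complex.exp_add, ← exp_pi_I_nat n]; ring_nf
    calc Complex.exp (Real.pi * Complex.I * ((n : ℂ) - ((n : ℂ) - k))) *
          s12 ^ (-(2 * (k : ℤ) - n)) * s23 ^ (-(2 * (k : ℤ) - n)) *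
          (Complex.exp (Real.pi * Complex.I * ((n : ℂ) - k)) * s12 ^ (2 * (k : ℤ) - n) *
            s23 ^ (2 * (k : ℤ) - n))
        = (Complex.exp (Real.pi * Complex.I * ((n : ℂ) - ((n : ℂ) - k))) *
            Complex.exp (Real.pi * Complex.I * ((n : ℂ) - k))) *
          (s12 ^ (-(2 * (k : ℤ) - n)) * s12 ^ (2 * (k : ℤ) - n)) *
          (s23 ^ (-(2 * (k : ℤ) - n)) * s23 ^ (2 * (k : ℤ) - n)) := by ring
      _ = (-1 : ℂ) ^ n := by rw [hexp, zpow_cancel h12, zpow_cancel h23]; ring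
  · unfold phi3
    have he : 2 * ((n - k : ℕ) : ℤ) - n = -(2 * (k : ℤ) - n) := by omega
    rw [he]
    have hexp : Complex.exp (-Real.pi * Complex.I * n / 2) *
        Complex.exp (-Real.pi * Complex.I * n / 2) = (-1 : ℂ) ^ n := by
      have : Complex.exp (-Real.pi * Complex.I * n / 2) *
          Complex.exp (-Real.pi * Complex.I * n / 2) =
          Complex.exp (-(Real.pi * Complex.I * n)) := by
        rw [← Complex.exp_add]; ring_nf
      rw [this, Complex.exp_neg, exp_pi_I_nat n]
      rcases Nat.even_or_odd n with h | h <;> simp [h.neg_one_pow] <;> norm_num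
    calc Complex.exp (-Real.pi * Complex.I * n / 2) * s13 ^ (-(2 * (k : ℤ) - n)) *
          s23 ^ (-(2 * (k : ℤ) - n)) *
          (Complex.exp (-Real.pi * Complex.I * n / 2) * s13 ^ (2 * (k : ℤ) - n) *
            s23 ^ (2 * (k : ℤ) - n))
        = (Complex.exp (-Real.pi * Complex.I * n / 2) *
            Complex.exp (-Real.pi * Complex.I * n / 2)) *
          (s13 ^ (-(2 * (k : ℤ) - n)) * s13 ^ (2 * (k : ℤ) - n)) *
          (s23 ^ (-(2 * (k : ℤ) - n)) * s23 ^ (2 * (k : ℤ) - n)) := by ring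
      _ = (-1 : ℂ) ^ n := by rw [hexp, zpow_cancel h13, zpow_cancel h23]; ring
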